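/- Let k be an algebraically closed field of characteristic 3 and a ∈ k. The projective plane quartic curve defined by x0^2x1^2 + x1^2x2^2 + x0^2x2^2 + a(x0^4 + x1^4 + x2^4) = 0 is smooth if and only if a ∉ F_3 (i.e., a ∉ {0, 1, -1}). -/

import Mathlib

open MvPolynomial

set_option maxHeartbeats 1000000

lemma quartic_eval (k : Type*) [Field k] (a : k) (p : Fin 3 → k) :
    eval p (X 0 ^ 2 * X 1 ^ 2 + X 1 ^ 2 * X 2 ^ 2 + X 0 ^ 2 * X 2 ^ 2
        + C a * (X 0 ^ 4 + X 1 ^ 4 + X 2 ^ 4) : MvPolynomial (Fin 3) k) =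
      p 0 ^ 2 * p 1 ^ 2 + p 1 ^ 2 * p 2 ^ 2 + p 0 ^ 2 * p 2 ^ 2
        + a * (p 0 ^ 4 + p 1 ^ 4 + p 2 ^ 4) := by
  simp

lemma quartic_pderiv_eval (k : Type*) [Field k] (a : k) (p : Fin 3 → k) :
    (eval p (pderiv 0 (X 0 ^ 2 * X 1 ^ 2 + X 1 ^ 2 * X 2 ^ 2 + X 0 ^ 2 * X 2 ^ 2
        + C a * (X 0 ^ 4 + X 1 ^ 4 + X 2 ^ 4) : MvPolynomial (Fin 3) k)) =
      2 * p 0 * p 1 ^ 2 + 2 * p 0 * p 2 ^ 2 + 4 * a * p 0 ^ 3) ∧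
    (eval p (pderiv 1 (X 0 ^ 2 * X 1 ^ 2 + X 1 ^ 2 * X 2 ^ 2 + X 0 ^ 2 * X 2 ^ 2
        + C a * (X 0 ^ 4 + X 1 ^ 4 + X 2 ^ 4) : MvPolynomial (Fin 3) k)) =
      2 * p 1 * p 0 ^ 2 + 2 * p 1 * p 2 ^ 2 + 4 * a * p 1 ^ 3) ∧
    (eval p (pderiv 2 (X 0 ^ 2 * X 1 ^ 2 + X 1 ^ 2 * X 2 ^ 2 + X 0 ^ 2 * X 2 ^ 2
        + C a * (X 0 ^ 4 + X 1 ^ 4 + X 2 ^ 4) : MvPolynomial (Fin 3) k)) =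
      2 * p 2 * p 0 ^ 2 + 2 * p 2 * p 1 ^ 2 + 4 * a * p 2 ^ 3) := by
  refine ⟨?_, ?_, ?_⟩ <;> (simp [pderiv_mul, pderiv_pow, pderiv_X]; ring)

/-- In characteristic 3 the quartic
`x0^2x1^2 + x1^2x2^2 + x0^2x2^2 + a(x0^4+x1^4+x2^4)` defines a smooth plane curve iff
`a ∉ F_3`, i.e. `a ∉ {0,1,-1}`. -/
theorem stmt_4 (k : Type*) [Field k] [IsAlgClosed k] [CharP k 3] (a : k)
    (F : MvPolynomial (Fin 3) k)
    (hF : F = X 0 ^ 2 * X 1 ^ 2 + X 1 ^ 2 * X 2 ^ 2 + X 0 ^ 2 * X 2 ^ 2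
        + C a * (X 0 ^ 4 + X 1 ^ 4 + X 2 ^ 4)) :
    (¬ ∃ p : Fin 3 → k, p ≠ 0 ∧ eval p F = 0 ∧ ∀ i, eval p (pderiv i F) = 0) ↔
      (a ≠ 0 ∧ a ≠ 1 ∧ a ≠ -1) := by
  have h3 : (3 : k) = 0 := by exact_mod_cast CharP.cast_eq_zero k 3
  subst hF
  constructor
  · intro hsm
    refine ⟨?_, ?_, ?_⟩
    · rintro rfl
      apply hsm
      refine ⟨![1, 0, 0], ?_, ?_, ?_⟩
      · intro h; simpa using congrFun h 0
      · rw [quartic_eval]; norm_num [Matrix.cons_val_two]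
      · intro i
        obtain ⟨e0, e1, e2⟩ := quartic_pderiv_eval k 0 ![1, 0, 0]
        fin_cases i
        · rw [show ((⟨0, by norm_num⟩ : Fin 3) : Fin 3) = 0 from rfl, e0]; norm_num [Matrix.cons_val_two]
        · rw [show ((⟨1, by norm_num⟩ : Fin 3) : Fin 3) = 1 from rfl, e1]; norm_num
        · rw [show ((⟨2, by norm_num⟩ : Fin 3) : Fin 3) = 2 from rfl, e2]; norm_num [Matrix.cons_val_two]
    · rintro rfl
      apply hsm
      refine ⟨![1, 1, 0], ?_, ?_, ?_⟩
      · intro h; simpa using congrFun h 0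
      · rw [quartic_eval]; norm_num [Matrix.cons_val_two]; linear_combination h3
      · intro i
        obtain ⟨e0, e1, e2⟩ := quartic_pderiv_eval k 1 ![1, 1, 0]
        fin_cases i
        · rw [show ((⟨0, by norm_num⟩ : Fin 3) : Fin 3) = 0 from rfl, e0]
          norm_num [Matrix.cons_val_two]; linear_combination 2 * h3
        · rw [show ((⟨1, by norm_num⟩ : Fin 3) : Fin 3) = 1 from rfl, e1]
          norm_num [Matrix.cons_val_two]; linear_combination 2 * h3
        · rw [show ((⟨2, by norm_num⟩ : Fin 3) : Fin 3) = 2 from rfl, e2]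
          norm_num [Matrix.cons_val_two]
    · rintro rfl
      apply hsm
      refine ⟨![1, 1, 1], ?_, ?_, ?_⟩
      · intro h; simpa using congrFun h 0
      · rw [quartic_eval]; norm_num [Matrix.cons_val_two]
      · intro i
        obtain ⟨e0, e1, e2⟩ := quartic_pderiv_eval k (-1) ![1, 1, 1]
        fin_cases i
        · rw [show ((⟨0, by norm_num⟩ : Fin 3) : Fin 3) = 0 from rfl, e0]
          norm_num [Matrix.cons_val_two]
        · rw [show ((⟨1, by norm_num⟩ : Fin 3) : Fin 3) = 1 from rfl, e1]
          norm_num [Matrix.cons_val_two]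
        · rw [show ((⟨2, by norm_num⟩ : Fin 3) : Fin 3) = 2 from rfl, e2]
          norm_num [Matrix.cons_val_two]
  · rintro ⟨ha0, ha1, ham1⟩ ⟨p, hp, hF0, hd⟩
    obtain ⟨e0, e1, e2⟩ := quartic_pderiv_eval k a p
    set x := p 0 with hxdef
    set y := p 1 with hydef
    set z := p 2 with hzdef
    have hzero : x = 0 → y = 0 → z = 0 → False := by
      intro h0 h1 h2
      exact hp (funext fun i => by fin_cases i <;> assumption)
    have hx : x * (a * x ^ 2 - y ^ 2 - z ^ 2) = 0 := by
      have := hd 0; rw [e0] at this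
      linear_combination this + (-(a * x ^ 3) - x * y ^ 2 - x * z ^ 2) * h3
    have hy : y * (a * y ^ 2 - x ^ 2 - z ^ 2) = 0 := by
      have := hd 1; rw [e1] at this
      linear_combination this + (-(a * y ^ 3) - y * x ^ 2 - y * z ^ 2) * h3
    have hz : z * (a * z ^ 2 - x ^ 2 - y ^ 2) = 0 := by
      have := hd 2; rw [e2] at this
      linear_combination this + (-(a * z ^ 3) - z * x ^ 2 - z * y ^ 2) * h3
    -- helper for the "two zero coordinates" case
    have htwo : ∀ u v : k, a * u ^ 2 = 0 → (u = 0 → v = 0 → False) → v = 0 → False := by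
      intro u v hu hcon hv
      rcases mul_eq_zero.mp hu with h | h
      · exact ha0 h
      · exact hcon (by
          have := pow_eq_zero_iff (n := 2) (by norm_num) |>.mp h
          exact this) hv
    -- helper for the "one zero coordinate" case: a*u² = v², a*v² = u², u,v not both 0
    have hone : ∀ u v : k, a * u ^ 2 - v ^ 2 = 0 → a * v ^ 2 - u ^ 2 = 0 →
        (u = 0 → v = 0 → False) → False := by
      intro u v h1 h2 hcon
      by_cases hu : u = 0
      · subst hu
        have hv2 : v ^ 2 = 0 := by linear_combination -h1
        exact hcon rfl (pow_eq_zero_iff (n := 2) (by norm_num) |>.mp hv2)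
      · have : (a ^ 2 - 1) * u ^ 2 = 0 := by linear_combination a * h1 + h2
        rcases mul_eq_zero.mp this with h | h
        · have : (a - 1) * (a + 1) = 0 := by linear_combination h
          rcases mul_eq_zero.mp this with h' | h'
          · exact ha1 (by linear_combination h')
          · exact ham1 (by linear_combination h')
        · exact hu (pow_eq_zero_iff (n := 2) (by norm_num) |>.mp h)
    rcases mul_eq_zero.mp hx with hx0 | hx1 <;>
      rcases mul_eq_zero.mp hy with hy0 | hy1 <;>
      rcases mul_eq_zero.mp hz with hz0 | hz1
    · exact hzero hx0 hy0 hz0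
    · -- x=0, y=0, a z² = x²+y²
      refine htwo z x (by linear_combination hz1 + x * hx0 + y * hy0) ?_ hx0
      · intro hz0 _; exact hzero hx0 hy0 hz0
    · refine htwo y x (by linear_combination hy1 + x * hx0 + z * hz0) ?_ hx0
      · intro hy0 _; exact hzero hx0 hy0 hz0
    · -- x = 0: a y² = z², a z² = y²
      refine hone y z (by linear_combination hy1 + x * hx0)
        (by linear_combination hz1 + x * hx0) ?_
      intro hy0 hz0; exact hzero hx0 hy0 hz0
    · refine htwo x y (by linear_combination hx1 + y * hy0 + z * hz0) ?_ hy0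
      · intro hx0 _; exact hzero hx0 hy0 hz0
    · refine hone x z (by linear_combination hx1 + y * hy0)
        (by linear_combination hz1 + y * hy0) ?_
      intro hx0 hz0; exact hzero hx0 hy0 hz0
    · refine hone x y (by linear_combination hx1 + z * hz0)
        (by linear_combination hy1 + z * hz0) ?_
      intro hx0 hy0; exact hzero hx0 hy0 hz0
    · -- all three equations hold
      have hs : (a + 1) * (x ^ 2 + y ^ 2 + z ^ 2) = 0 := by
        linear_combination hx1 + hy1 + hz1 + (x ^ 2 + y ^ 2 + z ^ 2) * h3
      have hap1 : a + 1 ≠ 0 := fun h => ham1 (by linear_combination h)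
      have hs0 : x ^ 2 + y ^ 2 + z ^ 2 = 0 :=
        (mul_eq_zero.mp hs).resolve_left hap1
      have hxx : (a + 1) * x ^ 2 = 0 := by linear_combination hx1 + hs0
      have hyy : (a + 1) * y ^ 2 = 0 := by linear_combination hy1 + hs0
      have hzz : (a + 1) * z ^ 2 = 0 := by linear_combination hz1 + hs0
      exact hzero
        (pow_eq_zero_iff (n := 2) (by norm_num) |>.mp ((mul_eq_zero.mp hxx).resolve_left hap1))
        (pow_eq_zero_iff (n := 2) (by norm_num) |>.mp ((mul_eq_zero.mp hyy).resolve_left hap1))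
        (pow_eq_zero_iff (n := 2) (by norm_num) |>.mp ((mul_eq_zero.mp hzz).resolve_left hap1))
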